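/- arXiv:2410.04330 — 2 statements merged into one kernel-verified Lean document; each statement's English description precedes it below -/
import Mathlib

section
/- Suppose (u_t)_{t∈ℤ} is a sequence of integrable ℝ^d-valued random vectors satisfying (i) E[u_t | u_s, s < t] = 0 almost surely for all t, and (ii) E[(u_t u_τ') ⊗ (u_{τ+k} u_{τ+k}')] = 0 for all τ > t and all k > 0. Then E[u_t u_τ' ⊗ u_{t+l} u_{τ+k}'] = 0 for all t < τ and all l, k > 0. -/
open MeasureTheory

lemma aux_mds_vanish
    {Ω : Type*} [mΩ : MeasurableSpace Ω] (μ : Measure Ω) [IsProbabilityMeasure μ]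
    {d : ℕ} (u : ℤ → Ω → Fin d → ℝ)
    (hmeas : ∀ t i, Measurable fun ω => u t ω i)
    (hint : ∀ t i, Integrable (fun ω => u t ω i) μ)
    (hmds : ∀ t : ℤ, ∀ i : Fin d,
      μ[(fun ω => u t ω i) |
        ⨆ s : {s : ℤ // s < t}, MeasurableSpace.comap (u s) inferInstance] =ᵐ[μ] 0)
    (m s1 s2 s3 : ℤ) (h1 : s1 < m) (h2 : s2 < m) (h3 : s3 < m)
    (i1 i2 i3 b : Fin d) :
    ∫ ω, (u s1 ω i1 * u s2 ω i2 * u s3 ω i3) * u m ω b ∂μ = 0 := by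
  have hGle : (⨆ s : {s : ℤ // s < m}, MeasurableSpace.comap (u s) inferInstance) ≤ mΩ := by
    refine iSup_le fun s => ?_
    have : Measurable (u s.1) := measurable_pi_lambda _ (fun i => hmeas s.1 i)
    exact this.comap_le
  set G : MeasurableSpace Ω :=
    ⨆ s : {s : ℤ // s < m}, MeasurableSpace.comap (u s) inferInstance with hG
  have hcomp : ∀ (s : ℤ), s < m → ∀ i : Fin d,
      Measurable[G] (fun ω => u s ω i) := by
    intro s hs i
    have h0 : Measurable[MeasurableSpace.comap (u s) inferInstance] (u s) :=
      comap_measurable _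
    have hone : Measurable[MeasurableSpace.comap (u s) inferInstance]
        (fun ω => u s ω i) := (measurable_pi_apply i).comp h0
    exact hone.mono (le_iSup (fun s : {s : ℤ // s < m} =>
      MeasurableSpace.comap (u s.1) inferInstance) ⟨s, hs⟩) le_rfl
  by_cases hI : Integrable (fun ω => (u s1 ω i1 * u s2 ω i2 * u s3 ω i3) * u m ω b) μ
  · have hf : StronglyMeasurable[G] (fun ω => u s1 ω i1 * u s2 ω i2 * u s3 ω i3) :=
      (((hcomp s1 h1 i1).mul (hcomp s2 h2 i2)).mul (hcomp s3 h3 i3)).stronglyMeasurable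
    haveI : SigmaFinite (μ.trim hGle) := by infer_instance
    have hpull := condExp_mul_of_stronglyMeasurable_left (m := G) (μ := μ)
      (f := fun ω => u s1 ω i1 * u s2 ω i2 * u s3 ω i3)
      (g := fun ω => u m ω b) hf hI (hint m b)
    have hzero : μ[(fun ω => u m ω b) | G] =ᵐ[μ] 0 := hmds m b
    have hfin : μ[(fun ω => u s1 ω i1 * u s2 ω i2 * u s3 ω i3) * (fun ω => u m ω b) | G]
        =ᵐ[μ] 0 := by
      refine hpull.trans ?_
      filter_upwards [hzero] with ω hω
      simp only [Pi.mul_apply, Pi.zero_apply] at hω ⊢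
      rw [hω, mul_zero]
    have : ∫ ω, (u s1 ω i1 * u s2 ω i2 * u s3 ω i3) * u m ω b ∂μ
        = ∫ ω, (μ[(fun ω => u s1 ω i1 * u s2 ω i2 * u s3 ω i3) * (fun ω => u m ω b) | G]) ω ∂μ :=
      (integral_condExp hGle).symm
    rw [this, integral_congr_ae hfin]; simp
  · exact integral_undef hI

/-- If `(u_t)` is a martingale difference sequence (`E[u_t | u_s, s < t] = 0` a.s.)
satisfying the fourth-moment restriction
`E[(u_t u_τ') ⊗ (u_{τ+k} u_{τ+k}')] = 0` for all `τ > t`, `k > 0`, then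
`E[u_t u_τ' ⊗ u_{t+l} u_{τ+k}'] = 0` for all `t < τ` and `l, k > 0`
(all expectations stated entrywise). -/
theorem kron_fourth_moment_vanishes
    {Ω : Type*} [MeasurableSpace Ω] (μ : Measure Ω) [IsProbabilityMeasure μ]
    {d : ℕ} (u : ℤ → Ω → Fin d → ℝ)
    (hmeas : ∀ t i, Measurable fun ω => u t ω i)
    (hint : ∀ t i, Integrable (fun ω => u t ω i) μ)
    (hmds : ∀ t : ℤ, ∀ i : Fin d,
      μ[(fun ω => u t ω i) |
        ⨆ s : {s : ℤ // s < t}, MeasurableSpace.comap (u s) inferInstance] =ᵐ[μ] 0)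
    (hfourth : ∀ t τ : ℤ, t < τ → ∀ k : ℤ, 0 < k → ∀ i j a b : Fin d,
      ∫ ω, u t ω i * u τ ω j * (u (τ + k) ω a * u (τ + k) ω b) ∂μ = 0) :
    ∀ t τ : ℤ, t < τ → ∀ l k : ℤ, 0 < l → 0 < k → ∀ i j a b : Fin d,
      ∫ ω, u t ω i * u τ ω j * (u (t + l) ω a * u (τ + k) ω b) ∂μ = 0 := by
  intro t τ htτ l k hl hk i j a b
  rcases lt_trichotomy (t + l) (τ + k) with hc | hc | hc
  · -- max is τ + k
    have heq : (fun ω => u t ω i * u τ ω j * (u (t + l) ω a * u (τ + k) ω b))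
        = fun ω => (u t ω i * u τ ω j * u (t + l) ω a) * u (τ + k) ω b := by
      funext ω; ring
    rw [heq]
    exact aux_mds_vanish μ u hmeas hint hmds (τ + k) t τ (t + l)
      (lt_of_lt_of_le htτ (by linarith)) (by linarith) hc i j a b
  · rw [hc]
    exact hfourth t τ htτ k hk i j a b
  · -- max is t + l
    have heq : (fun ω => u t ω i * u τ ω j * (u (t + l) ω a * u (τ + k) ω b))
        = fun ω => (u t ω i * u τ ω j * u (τ + k) ω b) * u (t + l) ω a := by
      funext ω; ring
    rw [heq]
    exact aux_mds_vanish μ u hmeas hint hmds (t + l) t τ (τ + k)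
      (by linarith) (by linarith) hc i j b a
end

section
/- Let (u_t) be a d-dimensional martingale difference sequence satisfying E[u_t | u_s, s<t] = 0 and E[(u_t u_τ') ⊗ (u_{τ+k} u_{τ+k}')] = 0 for all τ > t, k > 0. Fix a horizon h ≥ 1 and weights v₁ and matrices Ψ_i, and define e_{t,h} := Σ_{i=0}^{h−1} v₁' Ψ_i u_{t+h−i}. Then the process s_t := (e_{t,h}, e_{t+1,h}, …, e_{t+p−1,h}) ⊗ u_t is serially uncorrelated: E[s_t s_τ'] = 0 for all t ≠ τ. -/
open MeasureTheory Matrix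

section Aux

variable {Ω : Type*} [mΩ : MeasurableSpace Ω] (μ : Measure Ω) [IsProbabilityMeasure μ]
    {d : ℕ} (u : ℤ → Ω → Fin d → ℝ)

/-- Each `u s · b` is integrable, from the fourth-moment integrability. -/
theorem aux_uInt (hmeas : ∀ t i, Measurable fun ω => u t ω i)
    (hint4 : ∀ (t₁ t₂ t₃ t₄ : ℤ) (i j a b : Fin d),
      Integrable (fun ω => u t₁ ω i * u t₂ ω j * u t₃ ω a * u t₄ ω b) μ)
    (s : ℤ) (b : Fin d) : Integrable (fun ω => u s ω b) μ := by
  have h4 : Integrable (fun ω => 1 + (u s ω b)^4) μ := by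
    refine (integrable_const 1).add ?_
    exact (hint4 s s s s b b b b).congr (Filter.EventuallyEq.of_eq (funext fun ω => by ring))
  refine h4.mono' (hmeas s b).aestronglyMeasurable ?_
  filter_upwards with ω
  have := abs_nonneg (u s ω b)
  rw [Real.norm_eq_abs]
  nlinarith [sq_abs (u s ω b), sq_nonneg (abs (u s ω b) * abs (u s ω b) - 1),
    sq_nonneg (abs (u s ω b) - 1)]

/-- If one time index strictly dominates the other three, the fourth-order
product has zero mean, by the martingale-difference property. -/
theorem aux_mdskill (hmeas : ∀ t i, Measurable fun ω => u t ω i)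
    (hint4 : ∀ (t₁ t₂ t₃ t₄ : ℤ) (i j a b : Fin d),
      Integrable (fun ω => u t₁ ω i * u t₂ ω j * u t₃ ω a * u t₄ ω b) μ)
    (hmds : ∀ t : ℤ, ∀ i : Fin d,
      μ[(fun ω => u t ω i) |
        ⨆ s : {s : ℤ // s < t}, MeasurableSpace.comap (u s) inferInstance] =ᵐ[μ] 0)
    (t₁ t₂ t₃ s : ℤ) (h1 : t₁ < s) (h2 : t₂ < s) (h3 : t₃ < s) (i₁ i₂ i₃ b : Fin d) :
    ∫ ω, u t₁ ω i₁ * u t₂ ω i₂ * u t₃ ω i₃ * u s ω b ∂μ = 0 := by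
  have hm : (⨆ r : {r : ℤ // r < s}, MeasurableSpace.comap (u r) inferInstance) ≤ mΩ := by
    refine iSup_le fun r => ?_
    exact Measurable.comap_le (measurable_pi_iff.mpr (hmeas r))
  have hcomp : ∀ r : ℤ, r < s → ∀ k : Fin d,
      Measurable[⨆ r : {r : ℤ // r < s}, MeasurableSpace.comap (u r) inferInstance]
        (fun ω => u r ω k) := by
    intro r hr k
    have ha : Measurable[MeasurableSpace.comap (u r) inferInstance] (u r) :=
      Measurable.of_comap_le le_rfl
    have hb : Measurable[MeasurableSpace.comap (u r) inferInstance] (fun ω => u r ω k) :=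
      (measurable_pi_apply k).comp ha
    exact hb.mono (le_iSup (fun r : {r : ℤ // r < s} =>
      MeasurableSpace.comap (u r) inferInstance) ⟨r, hr⟩) le_rfl
  have hgm : StronglyMeasurable[⨆ r : {r : ℤ // r < s},
      MeasurableSpace.comap (u r) inferInstance]
      (fun ω => u t₁ ω i₁ * u t₂ ω i₂ * u t₃ ω i₃) :=
    Measurable.stronglyMeasurable
      (((hcomp t₁ h1 i₁).mul ((hcomp t₂ h2 i₂))).mul (hcomp t₃ h3 i₃))
  have hgX : Integrable ((fun ω => u t₁ ω i₁ * u t₂ ω i₂ * u t₃ ω i₃) * fun ω => u s ω b) μ :=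
    (hint4 t₁ t₂ t₃ s i₁ i₂ i₃ b).congr (Filter.EventuallyEq.of_eq rfl)
  have hX : Integrable (fun ω => u s ω b) μ := aux_uInt μ u hmeas hint4 s b
  have hpull := condExp_mul_of_stronglyMeasurable_left hgm hgX hX
  have hzero := hmds s b
  have h0 : μ[(fun ω => u t₁ ω i₁ * u t₂ ω i₂ * u t₃ ω i₃) * fun ω => u s ω b|
      ⨆ r : {r : ℤ // r < s}, MeasurableSpace.comap (u r) inferInstance] =ᵐ[μ] 0 := by
    refine hpull.trans ?_
    filter_upwards [hzero] with ω hω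
    simp only [Pi.mul_apply, Pi.zero_apply] at hω ⊢
    simp [hω]
  calc ∫ ω, u t₁ ω i₁ * u t₂ ω i₂ * u t₃ ω i₃ * u s ω b ∂μ
      = ∫ ω, ((fun ω => u t₁ ω i₁ * u t₂ ω i₂ * u t₃ ω i₃) * fun ω => u s ω b) ω ∂μ := rfl
    _ = ∫ ω, (μ[(fun ω => u t₁ ω i₁ * u t₂ ω i₂ * u t₃ ω i₃) * fun ω => u s ω b|
          ⨆ r : {r : ℤ // r < s}, MeasurableSpace.comap (u r) inferInstance]) ω ∂μ :=
        (integral_condExp hm).symm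
    _ = 0 := by rw [integral_congr_ae h0]; simp

/-- Core computation: the expectation of `u_{s₁} u_t u_{s₂} u_τ` vanishes when
`t < τ`, `t < s₁`, `τ < s₂`. -/
theorem aux_core (hmeas : ∀ t i, Measurable fun ω => u t ω i)
    (hint4 : ∀ (t₁ t₂ t₃ t₄ : ℤ) (i j a b : Fin d),
      Integrable (fun ω => u t₁ ω i * u t₂ ω j * u t₃ ω a * u t₄ ω b) μ)
    (hmds : ∀ t : ℤ, ∀ i : Fin d,
      μ[(fun ω => u t ω i) |
        ⨆ s : {s : ℤ // s < t}, MeasurableSpace.comap (u s) inferInstance] =ᵐ[μ] 0)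
    (hfourth : ∀ t τ : ℤ, t < τ → ∀ k : ℤ, 0 < k → ∀ i j a b : Fin d,
      ∫ ω, u t ω i * u τ ω j * (u (τ + k) ω a * u (τ + k) ω b) ∂μ = 0)
    (t τ s₁ s₂ : ℤ) (htτ : t < τ) (hs1 : t < s₁) (hs2 : τ < s₂) (n₁ i n₂ j : Fin d) :
    ∫ ω, u s₁ ω n₁ * u t ω i * (u s₂ ω n₂ * u τ ω j) ∂μ = 0 := by
  rcases lt_trichotomy s₁ s₂ with hlt | heq | hgt
  · rw [show (fun ω => u s₁ ω n₁ * u t ω i * (u s₂ ω n₂ * u τ ω j)) =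
        fun ω => u s₁ ω n₁ * u t ω i * u τ ω j * u s₂ ω n₂ from funext fun ω => by ring]
    exact aux_mdskill μ u hmeas hint4 hmds s₁ t τ s₂ hlt (htτ.trans hs2) hs2 n₁ i j n₂
  · subst heq
    have hf := hfourth t τ htτ (s₁ - τ) (by omega) i j n₁ n₂
    rw [show τ + (s₁ - τ) = s₁ by ring] at hf
    rw [show (fun ω => u s₁ ω n₁ * u t ω i * (u s₁ ω n₂ * u τ ω j)) =
        fun ω => u t ω i * u τ ω j * (u s₁ ω n₁ * u s₁ ω n₂) from funext fun ω => by ring]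
    exact hf
  · rw [show (fun ω => u s₁ ω n₁ * u t ω i * (u s₂ ω n₂ * u τ ω j)) =
        fun ω => u t ω i * u s₂ ω n₂ * u τ ω j * u s₁ ω n₁ from funext fun ω => by ring]
    exact aux_mdskill μ u hmeas hint4 hmds t s₂ τ s₁ hs1 hgt (hs2.trans hgt) i n₂ j n₁

end Aux

/-- For a martingale difference sequence `(u_t)` satisfying the fourth-moment
restriction, with `e_{t,h} = Σ_{i=0}^{h−1} v₁' Ψ_i u_{t+h−i}`, the process
`s_t = (e_{t,h}, …, e_{t+p−1,h}) ⊗ u_t` is serially uncorrelated: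
`E[s_t s_τ'] = 0` for all `t ≠ τ` (stated entrywise). -/
theorem score_process_serially_uncorrelated
    {Ω : Type*} [MeasurableSpace Ω] (μ : Measure Ω) [IsProbabilityMeasure μ]
    {d : ℕ} (u : ℤ → Ω → Fin d → ℝ)
    (hmeas : ∀ t i, Measurable fun ω => u t ω i)
    (hint4 : ∀ (t₁ t₂ t₃ t₄ : ℤ) (i j a b : Fin d),
      Integrable (fun ω => u t₁ ω i * u t₂ ω j * u t₃ ω a * u t₄ ω b) μ)
    (hmds : ∀ t : ℤ, ∀ i : Fin d,
      μ[(fun ω => u t ω i) |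
        ⨆ s : {s : ℤ // s < t}, MeasurableSpace.comap (u s) inferInstance] =ᵐ[μ] 0)
    (hfourth : ∀ t τ : ℤ, t < τ → ∀ k : ℤ, 0 < k → ∀ i j a b : Fin d,
      ∫ ω, u t ω i * u τ ω j * (u (τ + k) ω a * u (τ + k) ω b) ∂μ = 0)
    (h p : ℕ) (hh : 1 ≤ h) (hp : 1 ≤ p)
    (v₁ : Fin d → ℝ) (Ψ : ℕ → Matrix (Fin d) (Fin d) ℝ)
    (e : ℤ → Ω → ℝ)
    (he : ∀ t ω, e t ω =
      ∑ i ∈ Finset.range h, v₁ ⬝ᵥ (Ψ i).mulVec (u (t + (h : ℤ) - (i : ℤ)) ω)) :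
    ∀ t τ : ℤ, t ≠ τ → ∀ (a b : Fin p) (i j : Fin d),
      ∫ ω, (e (t + (a : ℤ)) ω * u t ω i) * (e (τ + (b : ℤ)) ω * u τ ω j) ∂μ = 0 := by
  -- It suffices to treat the case `t < τ`.
  have key : ∀ t τ : ℤ, t < τ → ∀ (a b : Fin p) (i j : Fin d),
      ∫ ω, (e (t + (a : ℤ)) ω * u t ω i) * (e (τ + (b : ℤ)) ω * u τ ω j) ∂μ = 0 := by
    intro t τ htτ a b i j
    set A : Finset (ℕ × ((Fin d × Fin d) × (ℕ × (Fin d × Fin d)))) :=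
      Finset.range h ×ˢ ((Finset.univ : Finset (Fin d × Fin d)) ×ˢ
        (Finset.range h ×ˢ (Finset.univ : Finset (Fin d × Fin d)))) with hA
    have hfun : (fun ω => (e (t + (a : ℤ)) ω * u t ω i) * (e (τ + (b : ℤ)) ω * u τ ω j)) =
        fun ω => ∑ x ∈ A,
          (v₁ x.2.1.1 * Ψ x.1 x.2.1.1 x.2.1.2 * (v₁ x.2.2.2.1 * Ψ x.2.2.1 x.2.2.2.1 x.2.2.2.2)) *
          (u (t + (a : ℤ) + (h : ℤ) - (x.2.2.1 : ℤ)) ω x.2.2.2.2 * u t ω i *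
            (u (τ + (b : ℤ) + (h : ℤ) - (x.1 : ℤ)) ω x.2.1.2 * u τ ω j)) := by
      funext ω
      rw [he (t + (a : ℤ)) ω, he (τ + (b : ℤ)) ω, hA]
      simp only [dotProduct, mulVec, Finset.sum_mul, Finset.mul_sum, Finset.sum_product,
        Fintype.sum_prod_type]
      refine Finset.sum_congr rfl fun i1 _ => ?_
      refine Finset.sum_congr rfl fun m1 _ => ?_
      refine Finset.sum_congr rfl fun n1 _ => ?_
      refine Finset.sum_congr rfl fun i2 _ => ?_
      refine Finset.sum_congr rfl fun m2 _ => ?_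
      refine Finset.sum_congr rfl fun n2 _ => ?_
      ring
    rw [hfun, integral_finset_sum]
    · refine Finset.sum_eq_zero fun x hx => ?_
      rw [integral_const_mul]
      have hx1 : x.2.2.1 < h := by
        rw [hA] at hx
        simp only [Finset.mem_product, Finset.mem_range, Finset.mem_univ] at hx
        exact hx.2.2.1
      have hx2 : x.1 < h := by
        rw [hA] at hx
        simp only [Finset.mem_product, Finset.mem_range, Finset.mem_univ] at hx
        exact hx.1
      have hs1 : t < t + (a : ℤ) + (h : ℤ) - (x.2.2.1 : ℤ) := by
        have : (a : ℤ) ≥ 0 := Int.ofNat_nonneg _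
        omega
      have hs2 : τ < τ + (b : ℤ) + (h : ℤ) - (x.1 : ℤ) := by
        have : (b : ℤ) ≥ 0 := Int.ofNat_nonneg _
        omega
      rw [aux_core μ u hmeas hint4 hmds hfourth t τ _ _ htτ hs1 hs2 _ i _ j]
      ring
    · intro x hx
      refine ((hint4 (t + (a : ℤ) + (h : ℤ) - (x.2.2.1 : ℤ)) t
          (τ + (b : ℤ) + (h : ℤ) - (x.1 : ℤ)) τ x.2.2.2.2 i x.2.1.2 j).const_mul
        (v₁ x.2.1.1 * Ψ x.1 x.2.1.1 x.2.1.2 *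
          (v₁ x.2.2.2.1 * Ψ x.2.2.1 x.2.2.2.1 x.2.2.2.2))).congr
        (Filter.EventuallyEq.of_eq (funext fun ω => by ring))
  intro t τ hne a b i j
  rcases hne.lt_or_gt with h1 | h1
  · exact key t τ h1 a b i j
  · rw [show (fun ω => (e (t + (a : ℤ)) ω * u t ω i) * (e (τ + (b : ℤ)) ω * u τ ω j)) =
        fun ω => (e (τ + (b : ℤ)) ω * u τ ω j) * (e (t + (a : ℤ)) ω * u t ω i) from
        funext fun ω => by ring]
    exact key τ t h1 b a j i
end
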